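/- Let X be a geodesic δ-hyperbolic metric space with basepoint x₀ and set C_δ = 432δ. Let A and B be hyperbolic isometries of X with l_S(A) > C_δ and l_S(B) > C_δ. Assume: (i) there exist geodesic lines L_A from A⁻ to A⁺ and L_B from B⁻ to B⁺; and (ii) the fixed-point pairs of A and B at infinity are disjoint, encoded by: for each choice of signs ε, ε' ∈ {+1, −1}, the family of Gromov products (A^{εn}x₀ | B^{ε'm}x₀)_{x₀}, for n,m ∈ ℕ, is bounded above. Then max( l_S(AB), l_S(AB⁻¹) ) ≥ l_S(A) + l_S(B) − C_δ. -/

import Mathlib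

open Metric Filter Set Topology

/-- The Gromov product `(x|y)_z = ½(d(z,x)+d(z,y)−d(x,y))`. -/
noncomputable def gromovProd {X : Type*} [MetricSpace X] (x y z : X) : ℝ :=
  (dist z x + dist z y - dist x y) / 2

/-- A parametrized geodesic segment from `x` to `y` (defined on `[0, dist x y]`). -/
def IsGeodesicSegment {X : Type*} [MetricSpace X] (x y : X) (f : ℝ → X) : Prop :=
  f 0 = x ∧ f (dist x y) = y ∧
    ∀ s ∈ Set.Icc (0 : ℝ) (dist x y), ∀ t ∈ Set.Icc (0 : ℝ) (dist x y),
      dist (f s) (f t) = |s - t|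

/-- The metric space `X` is geodesic: any two points are joined by a geodesic segment. -/
def GeodesicMetricSpace (X : Type*) [MetricSpace X] : Prop :=
  ∀ x y : X, ∃ f : ℝ → X, IsGeodesicSegment x y f

/-- `X` is δ-hyperbolic in the sense of Rips: every geodesic triangle is δ-thin,
i.e. each side is contained in the δ-neighbourhood of the union of the other two. -/
def RipsHyperbolic (X : Type*) [MetricSpace X] (δ : ℝ) : Prop :=
  ∀ (x y z : X) (f g h : ℝ → X),
    IsGeodesicSegment x y f → IsGeodesicSegment y z g → IsGeodesicSegment z x h →
      ∀ s ∈ Set.Icc (0 : ℝ) (dist x y),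
        infDist (f s) (g '' Set.Icc 0 (dist y z) ∪ h '' Set.Icc 0 (dist z x)) ≤ δ

/-- A (parametrized) geodesic line in `X`. -/
def IsGeodesicLine {X : Type*} [MetricSpace X] (L : ℝ → X) : Prop :=
  ∀ s t : ℝ, dist (L s) (L t) = |s - t|

/-- A (parametrized) geodesic ray in `X` (parametrized on `[0,∞)`). -/
def IsGeodesicRay {X : Type*} [MetricSpace X] (r : ℝ → X) : Prop :=
  ∀ s t : ℝ, 0 ≤ s → 0 ≤ t → dist (r s) (r t) = |s - t|

/-- `L` is a geodesic from `A⁻` to `A⁺` (oriented toward `A⁺`): it is a geodesic line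
such that, with `x₀ = L 0`, the Gromov products `(Aⁿx₀ | L t)_{x₀}` tend to `+∞` as
`min(n,t) → +∞`, and `(A⁻ⁿx₀ | L (−t))_{x₀}` tend to `+∞` as `min(n,t) → +∞`. -/
def IsGeodesicFromTo {X : Type*} [MetricSpace X] (A : X ≃ᵢ X) (L : ℝ → X) : Prop :=
  IsGeodesicLine L ∧
    (∀ M : ℝ, ∃ N : ℝ, ∀ (n : ℕ) (t : ℝ), N ≤ (n : ℝ) → N ≤ t →
      M ≤ gromovProd ((A ^ n) (L 0)) (L t) (L 0)) ∧
    (∀ M : ℝ, ∃ N : ℝ, ∀ (n : ℕ) (t : ℝ), N ≤ (n : ℝ) → N ≤ t →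
      M ≤ gromovProd ((A⁻¹ ^ n) (L 0)) (L (-t)) (L 0))

/-- An element of `F₂` is primitive if it is the image of a generator under an
automorphism of `F₂` (equivalently, it belongs to some free basis). -/
def Primitive (γ : FreeGroup (Fin 2)) : Prop :=
  ∃ φ : FreeGroup (Fin 2) ≃* FreeGroup (Fin 2), φ (FreeGroup.of 0) = γ

/-- The (reduced) word length of an element of `F₂`. -/
noncomputable def wordLength (γ : FreeGroup (Fin 2)) : ℕ := γ.toWord.length

/-- The cyclically reduced word length `‖γ‖`: the minimum of the word lengths
of the conjugates of `γ`. -/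
noncomputable def cycLength (γ : FreeGroup (Fin 2)) : ℕ :=
  sInf (Set.range fun g : FreeGroup (Fin 2) => wordLength (g * γ * g⁻¹))

/-- `γ` is cyclically reduced if its word length equals its cyclically reduced length. -/
def CyclicallyReduced (γ : FreeGroup (Fin 2)) : Prop :=
  wordLength γ = cycLength γ

section StableNormAux

variable {X : Type*} [MetricSpace X]

private lemma gp_nonneg (x y z : X) : 0 ≤ gromovProd x y z := by
  have h := dist_triangle x z y
  have h1 : dist x z = dist z x := dist_comm x z
  unfold gromovProd; linarith

private lemma gp_le_left (x y z : X) : gromovProd x y z ≤ dist z x := by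
  have h := dist_triangle z x y
  unfold gromovProd; linarith

private lemma gp_le_right (x y z : X) : gromovProd x y z ≤ dist z y := by
  have h := dist_triangle z y x
  have h1 : dist y x = dist x y := dist_comm y x
  unfold gromovProd; linarith

private lemma gp_comm (x y z : X) : gromovProd x y z = gromovProd y x z := by
  have h1 : dist x y = dist y x := dist_comm x y
  unfold gromovProd; linarith

private lemma gp_add (a b c : X) : gromovProd a b c + gromovProd a c b = dist b c := by
  have h1 : dist c a = dist a c := dist_comm c a
  have h2 : dist b a = dist a b := dist_comm b a
  have h3 : dist c b = dist b c := dist_comm c b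
  unfold gromovProd; linarith

private lemma dist_eq_gp (a b c : X) :
    dist a b = dist c a + dist c b - 2 * gromovProd a b c := by
  unfold gromovProd; ring

private lemma gp_isom (φ : X ≃ᵢ X) (a b c : X) :
    gromovProd (φ a) (φ b) (φ c) = gromovProd a b c := by
  unfold gromovProd
  rw [φ.dist_eq, φ.dist_eq, φ.dist_eq]

private lemma dist_inv_apply (φ : X ≃ᵢ X) (z : X) :
    dist (φ⁻¹ z) z = dist (φ z) z := by
  have h : dist (φ (φ⁻¹ z)) (φ z) = dist (φ⁻¹ z) z := φ.dist_eq _ _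
  rw [IsometryEquiv.apply_inv_self] at h
  rw [← h, dist_comm]

private lemma seg_dist_left {x y : X} {f : ℝ → X} (hf : IsGeodesicSegment x y f)
    {s : ℝ} (hs : s ∈ Set.Icc 0 (dist x y)) : dist x (f s) = s := by
  have h0 : (0 : ℝ) ∈ Set.Icc 0 (dist x y) := ⟨le_refl 0, dist_nonneg⟩
  have h := hf.2.2 0 h0 s hs
  rw [hf.1] at h
  rw [h, abs_of_nonpos (by linarith [hs.1]), neg_sub, sub_zero]

private lemma seg_dist_right {x y : X} {f : ℝ → X} (hf : IsGeodesicSegment x y f)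
    {s : ℝ} (hs : s ∈ Set.Icc 0 (dist x y)) : dist (f s) y = dist x y - s := by
  have h0 : (dist x y) ∈ Set.Icc 0 (dist x y) := ⟨dist_nonneg, le_refl _⟩
  have h := hf.2.2 s hs (dist x y) h0
  rw [hf.2.1] at h
  rw [h, abs_of_nonpos (by linarith [hs.2])]
  ring

private lemma seg_reverse {x y : X} {f : ℝ → X} (hf : IsGeodesicSegment x y f) :
    IsGeodesicSegment y x (fun s => f (dist x y - s)) := by
  have hd : dist y x = dist x y := dist_comm y x
  refine ⟨?_, ?_, ?_⟩
  · simp only [sub_zero]; exact hf.2.1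
  · rw [hd]; simp only [sub_self]; exact hf.1
  · intro s hs t ht
    rw [hd] at hs ht
    have hs' : dist x y - s ∈ Set.Icc 0 (dist x y) := ⟨by linarith [hs.2], by linarith [hs.1]⟩
    have ht' : dist x y - t ∈ Set.Icc 0 (dist x y) := ⟨by linarith [ht.2], by linarith [ht.1]⟩
    simp only
    rw [hf.2.2 _ hs' _ ht', show dist x y - s - (dist x y - t) = t - s by ring, abs_sub_comm]

private lemma seg_continuousOn {x y : X} {f : ℝ → X} (hf : IsGeodesicSegment x y f) :
    ContinuousOn f (Set.Icc 0 (dist x y)) := by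
  apply LipschitzOnWith.continuousOn (K := 1)
  apply LipschitzOnWith.of_dist_le_mul
  intro s hs t ht
  rw [hf.2.2 s hs t ht, Real.dist_eq, NNReal.coe_one, one_mul]

private lemma thin_side {δ : ℝ} (hhyp : RipsHyperbolic X δ) {x y z : X} {f g h : ℝ → X}
    (hf : IsGeodesicSegment x y f) (hg : IsGeodesicSegment y z g)
    (hh : IsGeodesicSegment z x h) {s : ℝ} (hs : s ∈ Set.Icc 0 (dist x y)) :
    ∃ q, (q ∈ g '' Set.Icc 0 (dist y z) ∨ q ∈ h '' Set.Icc 0 (dist z x)) ∧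
      dist (f s) q ≤ δ := by
  have hcg : IsCompact (g '' Set.Icc 0 (dist y z)) :=
    isCompact_Icc.image_of_continuousOn (seg_continuousOn hg)
  have hch : IsCompact (h '' Set.Icc 0 (dist z x)) :=
    isCompact_Icc.image_of_continuousOn (seg_continuousOn hh)
  have hne : (g '' Set.Icc 0 (dist y z) ∪ h '' Set.Icc 0 (dist z x)).Nonempty :=
    Set.Nonempty.inl ⟨g 0, Set.mem_image_of_mem g ⟨le_refl 0, dist_nonneg⟩⟩
  obtain ⟨q, hq, hdq⟩ := (hcg.union hch).exists_infDist_eq_dist hne (f s)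
  refine ⟨q, hq, ?_⟩
  rw [← hdq]
  exact hhyp x y z f g h hf hg hh s hs

private lemma gp_le_dist_of_seg {a b : X} {m : ℝ → X} (hm : IsGeodesicSegment a b m)
    {t : ℝ} (ht : t ∈ Set.Icc 0 (dist a b)) (w : X) : gromovProd a b w ≤ dist w (m t) := by
  have h1 : dist a (m t) = t := seg_dist_left hm ht
  have h2 : dist (m t) b = dist a b - t := seg_dist_right hm ht
  have h3 := dist_triangle w (m t) a
  have h4 := dist_triangle w (m t) b
  have h5 : dist (m t) a = dist a (m t) := dist_comm _ _
  unfold gromovProd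
  linarith

private lemma fourpt {δ : ℝ} (hδ : 0 ≤ δ) (hgeo : GeodesicMetricSpace X)
    (hhyp : RipsHyperbolic X δ) (w x y z : X) :
    min (gromovProd x z w) (gromovProd z y w) ≤ gromovProd x y w + 3 * δ := by
  have hs₀ : gromovProd y w x ∈ Set.Icc 0 (dist x y) := ⟨gp_nonneg _ _ _, gp_le_left y w x⟩
  set s₀ := gromovProd y w x with hs₀def
  have hs₀val : s₀ = (dist x y + dist x w - dist y w) / 2 := rfl
  obtain ⟨f, hf⟩ := hgeo x y
  have step1 : dist w (f s₀) ≤ gromovProd x y w + 2 * δ := by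
    have hgoalval : gromovProd x y w = (dist w x + dist w y - dist x y) / 2 := rfl
    have cwx : dist w x = dist x w := dist_comm w x
    have cwy : dist w y = dist y w := dist_comm w y
    obtain ⟨g1, hg1⟩ := hgeo y w
    obtain ⟨h1, hh1⟩ := hgeo w x
    obtain ⟨q, hq, hdq⟩ := thin_side hhyp hf hg1 hh1 hs₀
    rcases hq with ⟨tq, htq, rfl⟩ | ⟨tq, htq, rfl⟩
    · have e1 : dist y (g1 tq) = tq := seg_dist_left hg1 htq
      have e2 : dist (g1 tq) w = dist y w - tq := seg_dist_right hg1 htq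
      have e4 : dist y (f s₀) = dist x y - s₀ := by
        rw [dist_comm]; exact seg_dist_right hf hs₀
      have tri1 := dist_triangle y (g1 tq) (f s₀)
      have tri2 := dist_triangle w (g1 tq) (f s₀)
      have c1 : dist (g1 tq) (f s₀) = dist (f s₀) (g1 tq) := dist_comm _ _
      have c2 : dist w (g1 tq) = dist (g1 tq) w := dist_comm _ _
      have c3 : dist (f s₀) w = dist w (f s₀) := dist_comm _ _
      rw [hgoalval]
      linarith
    · have e1 : dist w (h1 tq) = tq := seg_dist_left hh1 htq
      have e2 : dist (h1 tq) x = dist w x - tq := seg_dist_right hh1 htq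
      have e4 : dist x (f s₀) = s₀ := seg_dist_left hf hs₀
      have tri1 := dist_triangle x (h1 tq) (f s₀)
      have tri2 := dist_triangle w (h1 tq) (f s₀)
      have c1 : dist x (h1 tq) = dist (h1 tq) x := dist_comm _ _
      have c2 : dist (h1 tq) (f s₀) = dist (f s₀) (h1 tq) := dist_comm _ _
      rw [hgoalval]
      linarith
  obtain ⟨g2, hg2⟩ := hgeo y z
  obtain ⟨h2, hh2⟩ := hgeo z x
  obtain ⟨q', hq', hdq'⟩ := thin_side hhyp hf hg2 hh2 hs₀
  rcases hq' with ⟨tq, htq, rfl⟩ | ⟨tq, htq, rfl⟩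
  · have k1 : gromovProd y z w ≤ dist w (g2 tq) := gp_le_dist_of_seg hg2 htq w
    have k2 := dist_triangle w (f s₀) (g2 tq)
    have k3 : gromovProd z y w = gromovProd y z w := gp_comm _ _ _
    refine le_trans (min_le_right _ _) ?_
    rw [k3]; linarith
  · have k1 : gromovProd z x w ≤ dist w (h2 tq) := gp_le_dist_of_seg hh2 htq w
    have k2 := dist_triangle w (f s₀) (h2 tq)
    have k3 : gromovProd x z w = gromovProd z x w := gp_comm _ _ _
    refine le_trans (min_le_left _ _) ?_
    rw [k3]; linarith

private lemma fellow {δ : ℝ} (hδ : 0 ≤ δ) (hgeo : GeodesicMetricSpace X)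
    (hhyp : RipsHyperbolic X δ) {x u v : X} {f g : ℝ → X}
    (hf : IsGeodesicSegment x u f) (hg : IsGeodesicSegment x v g) {t : ℝ}
    (ht : 0 ≤ t) (h : t + δ < gromovProd u v x) : dist (f t) (g t) ≤ 2 * δ := by
  have htu : t ∈ Set.Icc 0 (dist x u) :=
    ⟨ht, le_trans (by linarith) (le_of_lt (lt_of_lt_of_le h (gp_le_left u v x)))⟩
  have htv : t ∈ Set.Icc 0 (dist x v) :=
    ⟨ht, le_trans (by linarith) (le_of_lt (lt_of_lt_of_le h (gp_le_right u v x)))⟩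
  obtain ⟨g2, hg2⟩ := hgeo u v
  have hh2 : IsGeodesicSegment v x (fun s => g (dist x v - s)) := seg_reverse hg
  obtain ⟨q, hq, hdq⟩ := thin_side hhyp hf hg2 hh2 htu
  rcases hq with ⟨tq, htq, rfl⟩ | ⟨tq, htq, rfl⟩
  · exfalso
    have e1 : dist u (g2 tq) = tq := seg_dist_left hg2 htq
    have e2 : dist (g2 tq) v = dist u v - tq := seg_dist_right hg2 htq
    have e3 : dist (f t) u = dist x u - t := seg_dist_right hf htu
    have e5 : dist x (f t) = t := seg_dist_left hf htu
    have tri0 := dist_triangle x (f t) v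
    have tri1 := dist_triangle u (g2 tq) (f t)
    have tri2 := dist_triangle (f t) (g2 tq) v
    have c1 : dist u (f t) = dist (f t) u := dist_comm _ _
    have c2 : dist (g2 tq) (f t) = dist (f t) (g2 tq) := dist_comm _ _
    have c3 : dist u (f t) ≥ dist x u - t := by
      have := dist_triangle x (f t) u
      have cc : dist u (f t) = dist (f t) u := dist_comm _ _
      linarith
    have hP : gromovProd u v x = (dist x u + dist x v - dist u v) / 2 := rfl
    linarith
  · have hr : dist x v - tq ∈ Set.Icc 0 (dist x v) := by
      rw [dist_comm v x] at htq
      exact ⟨by linarith [htq.2], by linarith [htq.1]⟩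
    have e1 : dist x (g (dist x v - tq)) = dist x v - tq := seg_dist_left hg hr
    have e2 : dist x (f t) = t := seg_dist_left hf htu
    have e3 : |dist x (g (dist x v - tq)) - dist x (f t)| ≤ dist (g (dist x v - tq)) (f t) := by
      have h' := abs_dist_sub_le (g (dist x v - tq)) (f t) x
      rw [dist_comm (g (dist x v - tq)) x, dist_comm (f t) x] at h'
      exact h'
    rw [e1, e2] at e3
    have habs := abs_le.1 e3
    have c1 : dist (g (dist x v - tq)) (f t) = dist (f t) (g (dist x v - tq)) := dist_comm _ _
    have e4 : dist (g (dist x v - tq)) (g t) = |dist x v - tq - t| := hg.2.2 _ hr _ htv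
    have e5 : |dist x v - tq - t| ≤ δ := by
      rw [abs_le]
      constructor <;> linarith [habs.1, habs.2, hdq]
    calc dist (f t) (g t) ≤ dist (f t) (g (dist x v - tq)) + dist (g (dist x v - tq)) (g t) :=
          dist_triangle _ _ _
      _ ≤ δ + δ := by rw [e4]; exact add_le_add hdq e5
      _ = 2 * δ := by ring
/-- Moving distance `t` towards `φ⁻¹x` along a geodesic, in a direction also shared
with the geodesic towards `ψ x`, decreases `d(φ·,·)` by `2t` and almost preserves
`d(ψ·,·)`. -/
private lemma dich {δ : ℝ} (hδ : 0 ≤ δ) (hgeo : GeodesicMetricSpace X)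
    (hhyp : RipsHyperbolic X δ) (φ ψ : X ≃ᵢ X) (x : X) (t : ℝ) (ht : 0 ≤ t)
    (h2t : 2 * t ≤ dist x (φ x)) (hπ : t + δ < gromovProd (φ⁻¹ x) (ψ x) x)
    (hc : t + δ < gromovProd (φ x) (φ⁻¹ x) x) :
    ∃ z, dist (φ z) z + dist (ψ z) z ≤ dist x (φ x) + dist x (ψ x) - 2 * t + 6 * δ := by
  obtain ⟨f, hf⟩ := hgeo x (φ x)
  set u := dist x (φ x) with hu
  have hxinv : dist x (φ⁻¹ x) = u := by
    rw [dist_comm x (φ⁻¹ x), dist_inv_apply, dist_comm]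
  -- the geodesic from x to φ⁻¹ x obtained from f
  set g : ℝ → X := fun s => φ⁻¹ (f (u - s)) with hgdef
  have hg : IsGeodesicSegment x (φ⁻¹ x) g := by
    refine ⟨?_, ?_, ?_⟩
    · show φ⁻¹ (f (u - 0)) = x
      rw [sub_zero, hf.2.1, IsometryEquiv.inv_apply_self]
    · show φ⁻¹ (f (u - dist x (φ⁻¹ x))) = φ⁻¹ x
      rw [hxinv, sub_self, hf.1]
    · intro s hs t' ht'
      rw [hxinv] at hs ht'
      have hs' : u - s ∈ Set.Icc 0 u := ⟨by linarith [hs.2], by linarith [hs.1]⟩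
      have ht'' : u - t' ∈ Set.Icc 0 u := ⟨by linarith [ht'.2], by linarith [ht'.1]⟩
      show dist (φ⁻¹ (f (u - s))) (φ⁻¹ (f (u - t'))) = |s - t'|
      rw [(φ⁻¹).dist_eq, hf.2.2 _ hs' _ ht'',
        show u - s - (u - t') = t' - s by ring, abs_sub_comm]
  set z := g t with hzdef
  have htu : t ∈ Set.Icc 0 u := ⟨ht, by linarith⟩
  have hut : u - t ∈ Set.Icc 0 u := ⟨by linarith, by linarith⟩
  have hφz : φ z = f (u - t) := by
    show φ (φ⁻¹ (f (u - t))) = f (u - t)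
    rw [IsometryEquiv.apply_inv_self]
  -- displacement of φ at z
  have hfg : dist (f t) (g t) ≤ 2 * δ := fellow hδ hgeo hhyp hf hg ht hc
  have hdispφ : dist (φ z) z ≤ u - 2 * t + 2 * δ := by
    have e1 : dist (f (u - t)) (f t) = u - 2 * t := by
      rw [hf.2.2 _ hut _ htu, show u - t - t = u - 2*t by ring,
        abs_of_nonneg (by linarith)]
    calc dist (φ z) z ≤ dist (φ z) (f t) + dist (f t) z := dist_triangle _ _ _
      _ = dist (f (u - t)) (f t) + dist (f t) (g t) := by rw [hφz]
      _ ≤ (u - 2 * t) + 2 * δ := by rw [e1]; linarith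
  -- displacement of ψ at z
  obtain ⟨k, hk⟩ := hgeo x (ψ x)
  have hgk : dist (g t) (k t) ≤ 2 * δ := fellow hδ hgeo hhyp hg hk ht hπ
  have htk : t ∈ Set.Icc 0 (dist x (ψ x)) :=
    ⟨ht, le_trans (by linarith) (le_of_lt (lt_of_lt_of_le hπ (gp_le_right _ _ _)))⟩
  have hkdisp : dist (ψ (k t)) (k t) ≤ dist x (ψ x) := by
    have e1 : dist (ψ (k t)) (ψ x) = dist (k t) x := ψ.dist_eq _ _
    have e2 : dist (k t) x = t := by rw [dist_comm]; exact seg_dist_left hk htk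
    have e3 : dist (k t) (ψ x) = dist x (ψ x) - t := seg_dist_right hk htk
    calc dist (ψ (k t)) (k t) ≤ dist (ψ (k t)) (ψ x) + dist (ψ x) (k t) := dist_triangle _ _ _
      _ = t + (dist x (ψ x) - t) := by rw [e1, e2, dist_comm (ψ x) (k t), e3]
      _ = dist x (ψ x) := by ring
  have hdispψ : dist (ψ z) z ≤ dist x (ψ x) + 4 * δ := by
    have e1 : dist (ψ z) (ψ (k t)) = dist z (k t) := ψ.dist_eq _ _
    calc dist (ψ z) z ≤ dist (ψ z) (ψ (k t)) + dist (ψ (k t)) (k t) + dist (k t) z :=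
          dist_triangle4 _ _ _ _
      _ ≤ dist z (k t) + dist x (ψ x) + dist (k t) z := by rw [e1]; linarith
      _ ≤ dist x (ψ x) + 4 * δ := by
          have : dist (k t) z = dist z (k t) := dist_comm _ _
          have hz : dist z (k t) ≤ 2 * δ := hgk
          linarith
  exact ⟨z, by linarith⟩

/-- The invariant of the broken-geodesic (chain) argument. -/
private lemma chain_aux {δ : ℝ} (hδ : 0 ≤ δ) (hgeo : GeodesicMetricSpace X)
    (hhyp : RipsHyperbolic X δ) (y : ℕ → X) (C : ℝ)
    (hpiv : ∀ k, gromovProd (y k) (y (k + 2)) (y (k + 1)) ≤ C)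
    (hseg : ∀ i, 2 * C + 6 * δ < dist (y i) (y (i + 1))) :
    ∀ i, gromovProd (y 0) (y (i + 2)) (y (i + 1)) ≤ C + 3 * δ := by
  intro i
  induction i with
  | zero => exact le_trans (hpiv 0) (by linarith)
  | succ n ih =>
    have hadd := gp_add (y 0) (y (n + 2)) (y (n + 1))
    have hs := hseg (n + 1)
    have h1 : C + 3 * δ < gromovProd (y 0) (y (n + 1)) (y (n + 2)) := by
      have e : gromovProd (y 0) (y (n+1)) (y (n+2)) + gromovProd (y 0) (y (n+2)) (y (n+1)) =
          dist (y (n+1)) (y (n+2)) := gp_add _ _ _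
      linarith
    have h4 := fourpt hδ hgeo hhyp (y (n + 2)) (y (n + 1)) (y (n + 3)) (y 0)
    have h5 : gromovProd (y (n+1)) (y (n+3)) (y (n+2)) + 3 * δ ≤ C + 3 * δ := by
      linarith [hpiv (n + 1)]
    have hmin := le_trans h4 h5
    rcases min_le_iff.1 hmin with hcase | hcase
    · exfalso
      rw [gp_comm] at hcase
      linarith
    · exact hcase

private lemma chain_dist {δ : ℝ} (hδ : 0 ≤ δ) (hgeo : GeodesicMetricSpace X)
    (hhyp : RipsHyperbolic X δ) (y : ℕ → X) (C : ℝ)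
    (hpiv : ∀ k, gromovProd (y k) (y (k + 2)) (y (k + 1)) ≤ C)
    (hseg : ∀ i, 2 * C + 6 * δ < dist (y i) (y (i + 1))) :
    ∀ i, dist (y 0) (y (i + 1)) + dist (y (i + 1)) (y (i + 2)) - (2 * C + 6 * δ) ≤
      dist (y 0) (y (i + 2)) := by
  intro i
  have h1 := chain_aux hδ hgeo hhyp y C hpiv hseg i
  have h2 := dist_eq_gp (y 0) (y (i + 2)) (y (i + 1))
  have h3 : dist (y (i+1)) (y 0) = dist (y 0) (y (i+1)) := dist_comm _ _
  linarith

/-- Arithmetic selection of the sign ε. -/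
private lemma selection {cA cB pp pm sp sm d3 : ℝ}
    (h1 : pp ≤ cB + d3 ∨ pm ≤ cB + d3) (h2 : sm ≤ cB + d3 ∨ sp ≤ cB + d3)
    (h3 : sm ≤ cA + d3 ∨ pp ≤ cA + d3) (h4 : sp ≤ cA + d3 ∨ pm ≤ cA + d3) :
    pp + sp ≤ cA + cB + 2 * d3 ∨ pm + sm ≤ cA + cB + 2 * d3 := by
  rcases le_total cA cB with h | h <;> rcases h1 with h1 | h1 <;> rcases h2 with h2 | h2 <;>
    rcases h3 with h3 | h3 <;> rcases h4 with h4 | h4 <;>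
    first
      | (left; linarith)
      | (right; linarith)

/-- Stable norm is a lower bound for the displacement at every point. -/
private lemma stable_le_disp (Φ : X ≃ᵢ X) (x₀ : X) (l : ℝ)
    (hlim : Filter.Tendsto (fun n : ℕ => dist ((Φ ^ n) x₀) x₀ / n) Filter.atTop (nhds l))
    (z : X) : l ≤ dist (Φ z) z := by
  have hiter : ∀ n : ℕ, dist ((Φ ^ n) z) z ≤ n * dist (Φ z) z := by
    intro n
    induction n with
    | zero => simp
    | succ m ih =>
      have e1 : (Φ ^ (m + 1)) z = (Φ ^ m) (Φ z) := by
        rw [pow_succ, IsometryEquiv.mul_apply]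
      have e2 : dist ((Φ ^ m) (Φ z)) ((Φ ^ m) z) = dist (Φ z) z := (Φ ^ m).dist_eq _ _
      calc dist ((Φ ^ (m+1)) z) z ≤ dist ((Φ ^ (m+1)) z) ((Φ ^ m) z) + dist ((Φ ^ m) z) z :=
            dist_triangle _ _ _
        _ ≤ dist (Φ z) z + m * dist (Φ z) z := by rw [e1, e2]; linarith
        _ = (m + 1 : ℕ) * dist (Φ z) z := by push_cast; ring
  have hbound : ∀ n : ℕ, dist ((Φ ^ n) x₀) x₀ / n ≤ dist (Φ z) z + 2 * dist z x₀ * (1 / n) := by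
    intro n
    rcases Nat.eq_zero_or_pos n with rfl | hn
    · simp [dist_nonneg]
    · have hn' : (0 : ℝ) < n := by exact_mod_cast hn
      have e1 : dist ((Φ ^ n) x₀) x₀ ≤ n * dist (Φ z) z + 2 * dist z x₀ := by
        have t1 := dist_triangle ((Φ ^ n) x₀) ((Φ ^ n) z) z
        have t2 := dist_triangle ((Φ ^ n) x₀) ((Φ ^ n) z) x₀
        have t3 := dist_triangle ((Φ ^ n) z) z x₀
        have e2 : dist ((Φ ^ n) x₀) ((Φ ^ n) z) = dist x₀ z := (Φ ^ n).dist_eq _ _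
        have e3 : dist x₀ z = dist z x₀ := dist_comm _ _
        linarith [hiter n]
      rw [div_le_iff₀ hn']
      have : (dist (Φ z) z + 2 * dist z x₀ * (1 / n)) * n =
          n * dist (Φ z) z + 2 * dist z x₀ := by field_simp
      rw [this]
      exact e1
  have hrhs : Filter.Tendsto (fun n : ℕ => dist (Φ z) z + 2 * dist z x₀ * (1 / n))
      Filter.atTop (nhds (dist (Φ z) z + 2 * dist z x₀ * 0)) :=
    Filter.Tendsto.add tendsto_const_nhds
      (Filter.Tendsto.mul tendsto_const_nhds tendsto_one_div_atTop_nhds_zero_nat)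
  rw [mul_zero, add_zero] at hrhs
  exact le_of_tendsto_of_tendsto' hlim hrhs hbound

/-- Linear growth of the orbit gives a lower bound on the stable norm. -/
private lemma stable_ge (Φ : X ≃ᵢ X) (x₀ x : X) (K l : ℝ)
    (hlim : Filter.Tendsto (fun n : ℕ => dist ((Φ ^ n) x₀) x₀ / n) Filter.atTop (nhds l))
    (h : ∀ n : ℕ, (n : ℝ) * K ≤ dist ((Φ ^ n) x) x) : K ≤ l := by
  have hlhs : Filter.Tendsto (fun n : ℕ => K - 2 * dist x x₀ * (1 / n))
      Filter.atTop (nhds (K - 2 * dist x x₀ * 0)) :=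
    Filter.Tendsto.sub tendsto_const_nhds
      (Filter.Tendsto.mul tendsto_const_nhds tendsto_one_div_atTop_nhds_zero_nat)
  rw [mul_zero, sub_zero] at hlhs
  refine le_of_tendsto_of_tendsto hlhs hlim ?_
  filter_upwards [Filter.eventually_ge_atTop 1] with n hn
  have hn' : (0 : ℝ) < n := by exact_mod_cast hn
  have e1 : dist ((Φ ^ n) x) x ≤ dist ((Φ ^ n) x₀) x₀ + 2 * dist x x₀ := by
    have t1 := dist_triangle ((Φ ^ n) x) ((Φ ^ n) x₀) x₀
    have t2 := dist_triangle ((Φ ^ n) x) x₀ x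
    have e2 : dist ((Φ ^ n) x) ((Φ ^ n) x₀) = dist x x₀ := (Φ ^ n).dist_eq _ _
    have t3 := dist_triangle ((Φ ^ n) x) ((Φ ^ n) x₀) x
    have e3 : dist x₀ x = dist x x₀ := dist_comm _ _
    linarith
  rw [le_div_iff₀ hn']
  have : (K - 2 * dist x x₀ * (1 / n)) * n = n * K - 2 * dist x x₀ := by field_simp
  rw [this]
  linarith [h n]
/-- The main chain estimate: if the two relevant Gromov products at `x` are ≤ C and the
displacements are large, then the stable norm of `A'B'` is at least the sum of the
displacements minus `4C + 12δ`. -/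
private lemma main_chain {δ : ℝ} (hδ : 0 ≤ δ) (hgeo : GeodesicMetricSpace X)
    (hhyp : RipsHyperbolic X δ) (A' B' : X ≃ᵢ X) (x x₀ : X) (lA' lB' lg C : ℝ)
    (hlim : Filter.Tendsto (fun n : ℕ => dist (((A' * B') ^ n) x₀) x₀ / n)
      Filter.atTop (nhds lg))
    (hdA : lA' ≤ dist (A' x) x) (hdB : lB' ≤ dist (B' x) x)
    (hp : gromovProd (A'⁻¹ x) (B' x) x ≤ C)
    (hs : gromovProd (A' x) (B'⁻¹ x) x ≤ C)
    (hthrA : 2 * C + 6 * δ < lA') (hthrB : 2 * C + 6 * δ < lB') :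
    lA' + lB' - (4 * C + 12 * δ) ≤ lg := by
  set W := A' * B' with hW
  set y : ℕ → X := fun j => (W ^ (j / 2)) ((A' ^ (j % 2)) x) with hy
  have yE : ∀ k, y (2 * k) = (W ^ k) x := by
    intro k
    show (W ^ (2 * k / 2)) ((A' ^ (2 * k % 2)) x) = (W ^ k) x
    rw [show 2 * k / 2 = k by omega, show 2 * k % 2 = 0 by omega, pow_zero]
    rfl
  have yO : ∀ k, y (2 * k + 1) = (W ^ k) (A' x) := by
    intro k
    show (W ^ ((2 * k + 1) / 2)) ((A' ^ ((2 * k + 1) % 2)) x) = (W ^ k) (A' x)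
    rw [show (2 * k + 1) / 2 = k by omega, show (2 * k + 1) % 2 = 1 by omega, pow_one]
  have hWapp : ∀ z, W z = A' (B' z) := fun z => rfl
  have segE : ∀ k, dist (y (2 * k)) (y (2 * k + 1)) = dist (A' x) x := by
    intro k
    rw [yE, yO, (W ^ k).dist_eq, dist_comm]
  have segO : ∀ k, dist (y (2 * k + 1)) (y (2 * k + 2)) = dist (B' x) x := by
    intro k
    have e1 : y (2 * k + 2) = (W ^ k) (W x) := by
      rw [show 2 * k + 2 = 2 * (k + 1) by ring, yE, pow_succ, IsometryEquiv.mul_apply]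
    rw [yO, e1, (W ^ k).dist_eq, hWapp]
    rw [A'.dist_eq x (B' x), dist_comm]
  have pivO : ∀ k, gromovProd (y (2 * k)) (y (2 * k + 2)) (y (2 * k + 1)) ≤ C := by
    intro k
    have e1 : y (2 * k + 2) = (W ^ k) (W x) := by
      rw [show 2 * k + 2 = 2 * (k + 1) by ring, yE, pow_succ, IsometryEquiv.mul_apply]
    rw [yE, yO, e1, gp_isom]
    have e2 : gromovProd (A'⁻¹ x) (A'⁻¹ (W x)) (A'⁻¹ (A' x)) = gromovProd x (W x) (A' x) :=
      gp_isom A'⁻¹ _ _ _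
    have e3 : A'⁻¹ (W x) = B' x := by rw [hWapp, IsometryEquiv.inv_apply_self]
    have e4 : A'⁻¹ (A' x) = x := IsometryEquiv.inv_apply_self _ _
    rw [← e2, e3, e4]
    exact hp
  have pivE : ∀ k, gromovProd (y (2 * k + 1)) (y (2 * k + 3)) (y (2 * k + 2)) ≤ C := by
    intro k
    have e1 : y (2 * k + 2) = (W ^ k) (W x) := by
      rw [show 2 * k + 2 = 2 * (k + 1) by ring, yE, pow_succ, IsometryEquiv.mul_apply]
    have e2 : y (2 * k + 3) = (W ^ k) (W (A' x)) := by
      rw [show 2 * k + 3 = 2 * (k + 1) + 1 by ring, yO, pow_succ, IsometryEquiv.mul_apply]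
    rw [yO, e1, e2, gp_isom]
    have e3 : gromovProd (W⁻¹ (A' x)) (W⁻¹ (W (A' x))) (W⁻¹ (W x)) =
        gromovProd (A' x) (W (A' x)) (W x) := gp_isom W⁻¹ _ _ _
    have e4 : W⁻¹ (A' x) = B'⁻¹ x := by
      rw [hW, mul_inv_rev, IsometryEquiv.mul_apply, IsometryEquiv.inv_apply_self]
    have e5 : W⁻¹ (W (A' x)) = A' x := IsometryEquiv.inv_apply_self _ _
    have e6 : W⁻¹ (W x) = x := IsometryEquiv.inv_apply_self _ _
    rw [← e3, e4, e5, e6, gp_comm]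
    exact hs
  have hpiv : ∀ k, gromovProd (y k) (y (k + 2)) (y (k + 1)) ≤ C := by
    intro k
    rcases Nat.even_or_odd k with ⟨m, rfl⟩ | ⟨m, rfl⟩
    · rw [show m + m = 2 * m by ring, show 2 * m + 2 = 2 * m + 2 from rfl]
      exact pivO m
    · exact pivE m
  have hseg : ∀ i, 2 * C + 6 * δ < dist (y i) (y (i + 1)) := by
    intro i
    rcases Nat.even_or_odd i with ⟨m, rfl⟩ | ⟨m, rfl⟩
    · rw [show m + m = 2 * m by ring, segE m]
      linarith
    · rw [show 2 * m + 1 + 1 = 2 * m + 2 from rfl, segO m]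
      linarith
  set E := 2 * C + 6 * δ with hE
  have hcd := chain_dist hδ hgeo hhyp y C hpiv hseg
  set dA := dist (A' x) x with hdAdef
  set dB := dist (B' x) x with hdBdef
  have fold : ∀ n : ℕ, (n : ℝ) * (dA + dB - 2 * E) + dA ≤ dist (y 0) (y (2 * n + 1)) := by
    intro n
    induction n with
    | zero =>
      have e1 : y 0 = x := by
        have := yE 0; simpa using this
      have e2 : y 1 = A' x := by
        have := yO 0; simpa using this
      rw [e1, e2]
      simp [dist_comm x (A' x), hdAdef]
    | succ m ih =>
      have s1 := hcd (2 * m + 1)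
      have s2 := hcd (2 * m)
      have e1 : dist (y (2 * m + 1)) (y (2 * m + 2)) = dB := segO m
      have e2 : dist (y (2 * m + 2)) (y (2 * m + 3)) = dA := by
        have hsegE := segE (m + 1)
        rw [show 2 * (m + 1) = 2 * m + 2 by ring] at hsegE
        rw [show 2 * m + 2 + 1 = 2 * m + 3 by ring] at hsegE
        exact hsegE
      have e3 : (2 * m + 1) + 1 = 2 * m + 2 := rfl
      have e4 : (2 * m + 1) + 2 = 2 * m + 3 := rfl
      have e5 : 2 * (m + 1) + 1 = 2 * m + 3 := by ring
      rw [e5]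
      rw [e3, e4] at s1
      rw [show (2 * m) + 1 = 2 * m + 1 from rfl, show (2 * m) + 2 = 2 * m + 2 from rfl] at s2
      push_cast
      push_cast at ih
      linarith
  have horb : ∀ n : ℕ, (n : ℝ) * (dA + dB - 2 * E) ≤ dist ((W ^ n) x) x := by
    intro n
    have f1 := fold n
    have e0 : y 0 = x := by have := yE 0; simpa using this
    have e1 : y (2 * n) = (W ^ n) x := yE n
    have t1 := dist_triangle x (y (2 * n)) (y (2 * n + 1))
    have t2 : dist (y (2 * n)) (y (2 * n + 1)) = dA := segE n
    rw [e0] at f1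
    rw [e1] at t1 t2
    have hcomm : dist x ((W ^ n) x) = dist ((W ^ n) x) x := dist_comm _ _
    linarith
  have := stable_ge W x₀ x (dA + dB - 2 * E) lg hlim horb
  have hEnn : 0 ≤ E := by
    have h0 := gp_nonneg (A'⁻¹ x) (B' x) x
    linarith
  linarith

/-- At a near-minimum of the joint displacement, for each of the pairings,
either the Gromov product or the corresponding self-product is ≤ 4δ + κ. -/
private lemma minfact {δ : ℝ} (hδ : 0 ≤ δ) (hgeo : GeodesicMetricSpace X)
    (hhyp : RipsHyperbolic X δ) (A B φ ψ : X ≃ᵢ X) (x : X) (κ : ℝ) (hκ : 0 < κ)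
    (hsum : ∀ z, dist (φ z) z + dist (ψ z) z = dist (A z) z + dist (B z) z)
    (hx : ∀ z, dist (A x) x + dist (B x) x - κ < dist (A z) z + dist (B z) z)
    (hbig : 6 * δ + 2 * κ ≤ dist x (φ x)) :
    gromovProd (φ⁻¹ x) (ψ x) x ≤ 4 * δ + κ ∨ gromovProd (φ x) (φ⁻¹ x) x ≤ 4 * δ + κ := by
  by_contra hcon
  push_neg at hcon
  obtain ⟨h1, h2⟩ := hcon
  obtain ⟨z, hz⟩ := dich hδ hgeo hhyp φ ψ x (3 * δ + κ) (by linarith) (by linarith)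
    (by linarith) (by linarith)
  have e1 := hsum z
  have e2 := hsum x
  have e3 : dist x (φ x) = dist (φ x) x := dist_comm _ _
  have e4 : dist x (ψ x) = dist (ψ x) x := dist_comm _ _
  have := hx z
  linarith

end StableNormAux

/-- Length of a product of hyperbolic isometries. With `C_δ = 432δ`, if
`A` and `B` are hyperbolic isometries with `l_S(A) > C_δ`, `l_S(B) > C_δ`, admitting
geodesic lines between their fixed points at infinity, and with disjoint fixed-point
pairs at infinity (encoded by boundedness of the Gromov products of the four pairs of
half-orbits), then `max(l_S(AB), l_S(AB⁻¹)) ≥ l_S(A) + l_S(B) − C_δ`. -/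
theorem stable_norm_product_max_bound
    {X : Type*} [MetricSpace X] (δ : ℝ) (hδ : 0 ≤ δ)
    (hgeo : GeodesicMetricSpace X) (hhyp : RipsHyperbolic X δ)
    (x₀ : X) (A B : X ≃ᵢ X) (lA lB lAB lABinv : ℝ)
    (hlA : Tendsto (fun n : ℕ => dist ((A ^ n) x₀) x₀ / n) atTop (𝓝 lA))
    (hlB : Tendsto (fun n : ℕ => dist ((B ^ n) x₀) x₀ / n) atTop (𝓝 lB))
    (hlAB : Tendsto (fun n : ℕ => dist (((A * B) ^ n) x₀) x₀ / n) atTop (𝓝 lAB))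
    (hlABinv : Tendsto (fun n : ℕ => dist (((A * B⁻¹) ^ n) x₀) x₀ / n) atTop (𝓝 lABinv))
    (hlAbig : lA > 432 * δ) (hlBbig : lB > 432 * δ)
    (hLA : ∃ LA : ℝ → X, IsGeodesicFromTo A LA)
    (hLB : ∃ LB : ℝ → X, IsGeodesicFromTo B LB)
    (hdisj : ∀ A' : X ≃ᵢ X, (A' = A ∨ A' = A⁻¹) → ∀ B' : X ≃ᵢ X, (B' = B ∨ B' = B⁻¹) →
      ∃ M : ℝ, ∀ n m : ℕ, gromovProd ((A' ^ n) x₀) ((B' ^ m) x₀) x₀ ≤ M) :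
    lA + lB - 432 * δ ≤ max lAB lABinv := by
  clear hLA hLB hdisj
  have hlA0 : 0 < lA := lt_of_le_of_lt (by positivity) hlAbig
  have hlB0 : 0 < lB := lt_of_le_of_lt (by positivity) hlBbig
  have hdispA : ∀ z, lA ≤ dist (A z) z := stable_le_disp A x₀ lA hlA
  have hdispB : ∀ z, lB ≤ dist (B z) z := stable_le_disp B x₀ lB hlB
  have hdispAinv : ∀ z, lA ≤ dist (A⁻¹ z) z := fun z => by
    rw [dist_inv_apply]; exact hdispA z
  have hdispBinv : ∀ z, lB ≤ dist (B⁻¹ z) z := fun z => by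
    rw [dist_inv_apply]; exact hdispB z
  -- main claim, for every small positive κ
  have key : ∀ κ : ℝ, 0 < κ → κ ≤ lA / 1000 → κ ≤ lB / 1000 →
      lA + lB - 68 * δ - 8 * κ ≤ max lAB lABinv := by
    intro κ hκ hκA hκB
    -- a near-minimizer of the joint displacement
    have hbdd : BddBelow (Set.range fun z : X => dist (A z) z + dist (B z) z) := by
      refine ⟨0, ?_⟩
      rintro v ⟨z, rfl⟩
      have n1 := dist_nonneg (x := A z) (y := z)
      have n2 := dist_nonneg (x := B z) (y := z)
      simp only
      linarith
    have hne : (Set.range fun z : X => dist (A z) z + dist (B z) z).Nonempty :=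
      ⟨_, ⟨x₀, rfl⟩⟩
    obtain ⟨v, ⟨x, rfl⟩, hvlt⟩ := Real.lt_sInf_add_pos hne hκ
    simp only at hvlt
    have hxmin : ∀ z, dist (A x) x + dist (B x) x - κ < dist (A z) z + dist (B z) z := by
      intro z
      have h1 : sInf (Set.range fun z : X => dist (A z) z + dist (B z) z) ≤
          dist (A z) z + dist (B z) z := csInf_le hbdd ⟨z, rfl⟩
      linarith
    -- the eight instances of the variational dichotomy
    have hbigA : 6 * δ + 2 * κ ≤ dist x (A x) := by
      rw [dist_comm]; have := hdispA x; linarith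
    have hbigAinv : 6 * δ + 2 * κ ≤ dist x (A⁻¹ x) := by
      rw [dist_comm]; have := hdispAinv x; linarith
    have hbigB : 6 * δ + 2 * κ ≤ dist x (B x) := by
      rw [dist_comm]; have := hdispB x; linarith
    have hbigBinv : 6 * δ + 2 * κ ≤ dist x (B⁻¹ x) := by
      rw [dist_comm]; have := hdispBinv x; linarith
    have hsumABinv : ∀ z, dist (A z) z + dist (B⁻¹ z) z = dist (A z) z + dist (B z) z :=
      fun z => by rw [dist_inv_apply]
    have hsumAinvB : ∀ z, dist (A⁻¹ z) z + dist (B z) z = dist (A z) z + dist (B z) z :=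
      fun z => by rw [dist_inv_apply]
    have hsumAinvBinv : ∀ z, dist (A⁻¹ z) z + dist (B⁻¹ z) z = dist (A z) z + dist (B z) z :=
      fun z => by rw [dist_inv_apply, dist_inv_apply]
    have hsumBA : ∀ z, dist (B z) z + dist (A z) z = dist (A z) z + dist (B z) z :=
      fun z => by ring
    have hsumBAinv : ∀ z, dist (B z) z + dist (A⁻¹ z) z = dist (A z) z + dist (B z) z :=
      fun z => by rw [dist_inv_apply]; ring
    have hsumBinvA : ∀ z, dist (B⁻¹ z) z + dist (A z) z = dist (A z) z + dist (B z) z :=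
      fun z => by rw [dist_inv_apply]; ring
    have hsumBinvAinv : ∀ z, dist (B⁻¹ z) z + dist (A⁻¹ z) z = dist (A z) z + dist (B z) z :=
      fun z => by rw [dist_inv_apply, dist_inv_apply]; ring
    -- dichotomies (A-modes)
    have dA_pp : gromovProd (A⁻¹ x) (B x) x ≤ 4 * δ + κ ∨
        gromovProd (A x) (A⁻¹ x) x ≤ 4 * δ + κ :=
      minfact hδ hgeo hhyp A B A B x κ hκ (fun z => rfl) hxmin hbigA
    have dA_pm : gromovProd (A⁻¹ x) (B⁻¹ x) x ≤ 4 * δ + κ ∨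
        gromovProd (A x) (A⁻¹ x) x ≤ 4 * δ + κ :=
      minfact hδ hgeo hhyp A B A B⁻¹ x κ hκ hsumABinv hxmin hbigA
    have dA_sm : gromovProd (A x) (B x) x ≤ 4 * δ + κ ∨
        gromovProd (A x) (A⁻¹ x) x ≤ 4 * δ + κ := by
      have h := minfact hδ hgeo hhyp A B A⁻¹ B x κ hκ hsumAinvB hxmin hbigAinv
      rw [inv_inv] at h
      exact h.imp id (fun h' => by rw [gp_comm]; exact h')
    have dA_sp : gromovProd (A x) (B⁻¹ x) x ≤ 4 * δ + κ ∨
        gromovProd (A x) (A⁻¹ x) x ≤ 4 * δ + κ := by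
      have h := minfact hδ hgeo hhyp A B A⁻¹ B⁻¹ x κ hκ hsumAinvBinv hxmin hbigAinv
      rw [inv_inv] at h
      exact h.imp id (fun h' => by rw [gp_comm]; exact h')
    -- dichotomies (B-modes)
    have dB_pp : gromovProd (A⁻¹ x) (B x) x ≤ 4 * δ + κ ∨
        gromovProd (B x) (B⁻¹ x) x ≤ 4 * δ + κ := by
      have h := minfact hδ hgeo hhyp A B B⁻¹ A⁻¹ x κ hκ hsumBinvAinv hxmin hbigBinv
      rw [inv_inv] at h
      exact h.imp (fun h' => by rw [gp_comm]; exact h') (fun h' => by rw [gp_comm]; exact h')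
    have dB_pm : gromovProd (A⁻¹ x) (B⁻¹ x) x ≤ 4 * δ + κ ∨
        gromovProd (B x) (B⁻¹ x) x ≤ 4 * δ + κ := by
      have h := minfact hδ hgeo hhyp A B B A⁻¹ x κ hκ hsumBAinv hxmin hbigB
      exact h.imp (fun h' => by rw [gp_comm]; exact h') id
    have dB_sm : gromovProd (A x) (B x) x ≤ 4 * δ + κ ∨
        gromovProd (B x) (B⁻¹ x) x ≤ 4 * δ + κ := by
      have h := minfact hδ hgeo hhyp A B B⁻¹ A x κ hκ hsumBinvA hxmin hbigBinv
      rw [inv_inv] at h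
      exact h.imp (fun h' => by rw [gp_comm]; exact h') (fun h' => by rw [gp_comm]; exact h')
    have dB_sp : gromovProd (A x) (B⁻¹ x) x ≤ 4 * δ + κ ∨
        gromovProd (B x) (B⁻¹ x) x ≤ 4 * δ + κ := by
      have h := minfact hδ hgeo hhyp A B B A x κ hκ hsumBA hxmin hbigB
      exact h.imp (fun h' => by rw [gp_comm]; exact h') id
    -- conclusion: for some sign ε, both products are ≤ Cb := 14δ + 2κ
    have hselect : (gromovProd (A⁻¹ x) (B x) x ≤ 14 * δ + 2 * κ ∧
          gromovProd (A x) (B⁻¹ x) x ≤ 14 * δ + 2 * κ) ∨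
        (gromovProd (A⁻¹ x) (B⁻¹ x) x ≤ 14 * δ + 2 * κ ∧
          gromovProd (A x) (B x) x ≤ 14 * δ + 2 * κ) := by
      rcases le_or_gt (gromovProd (A x) (A⁻¹ x) x) (4 * δ + κ) with hA | hA
      · rcases le_or_gt (gromovProd (B x) (B⁻¹ x) x) (4 * δ + κ) with hB | hB
        · -- both self-products small: four-point selection
          have f1 := fourpt hδ hgeo hhyp x (B x) (B⁻¹ x) (A⁻¹ x)
          have f2 := fourpt hδ hgeo hhyp x (B x) (B⁻¹ x) (A x)
          have f3 := fourpt hδ hgeo hhyp x (A x) (A⁻¹ x) (B x)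
          have f4 := fourpt hδ hgeo hhyp x (A x) (A⁻¹ x) (B⁻¹ x)
          have g1 : gromovProd (A⁻¹ x) (B x) x ≤ gromovProd (B x) (B⁻¹ x) x + 3 * δ ∨
              gromovProd (A⁻¹ x) (B⁻¹ x) x ≤ gromovProd (B x) (B⁻¹ x) x + 3 * δ :=
            (min_le_iff.1 f1).imp (fun h' => by rw [gp_comm]; exact h') id
          have g2 : gromovProd (A x) (B x) x ≤ gromovProd (B x) (B⁻¹ x) x + 3 * δ ∨
              gromovProd (A x) (B⁻¹ x) x ≤ gromovProd (B x) (B⁻¹ x) x + 3 * δ :=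
            (min_le_iff.1 f2).imp (fun h' => by rw [gp_comm]; exact h') id
          have g3 : gromovProd (A x) (B x) x ≤ gromovProd (A x) (A⁻¹ x) x + 3 * δ ∨
              gromovProd (A⁻¹ x) (B x) x ≤ gromovProd (A x) (A⁻¹ x) x + 3 * δ :=
            (min_le_iff.1 f3).imp id (fun h' => by rw [gp_comm]; exact h')
          have g4 : gromovProd (A x) (B⁻¹ x) x ≤ gromovProd (A x) (A⁻¹ x) x + 3 * δ ∨
              gromovProd (A⁻¹ x) (B⁻¹ x) x ≤ gromovProd (A x) (A⁻¹ x) x + 3 * δ :=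
            (min_le_iff.1 f4).imp id (fun h' => by rw [gp_comm]; exact h')
          have hsel := selection g1 g2 g3 g4
          have hppn := gp_nonneg (A⁻¹ x) (B x) x
          have hpmn := gp_nonneg (A⁻¹ x) (B⁻¹ x) x
          have hspn := gp_nonneg (A x) (B⁻¹ x) x
          have hsmn := gp_nonneg (A x) (B x) x
          rcases hsel with h | h
          · exact Or.inl ⟨by linarith, by linarith⟩
          · exact Or.inr ⟨by linarith, by linarith⟩
        · -- cB large : all products small via B-modes
          refine Or.inl ⟨?_, ?_⟩
          · rcases dB_pp with h | h
            · linarith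
            · linarith
          · rcases dB_sp with h | h
            · linarith
            · linarith
      · -- cA large : all products small via A-modes
        refine Or.inl ⟨?_, ?_⟩
        · rcases dA_pp with h | h
          · linarith
          · linarith
        · rcases dA_sp with h | h
          · linarith
          · linarith
    -- run the chain argument
    have hthrA : 2 * (14 * δ + 2 * κ) + 6 * δ < lA := by linarith
    have hthrB : 2 * (14 * δ + 2 * κ) + 6 * δ < lB := by linarith
    rcases hselect with ⟨h1, h2⟩ | ⟨h1, h2⟩
    · have hmc := main_chain hδ hgeo hhyp A B x x₀ lA lB lAB (14 * δ + 2 * κ) hlAB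
        (hdispA x) (hdispB x) h1 h2 hthrA hthrB
      have hle : lAB ≤ max lAB lABinv := le_max_left _ _
      linarith
    · have h2' : gromovProd (A x) ((B⁻¹)⁻¹ x) x ≤ 14 * δ + 2 * κ := by
        rw [inv_inv]; exact h2
      have hmc := main_chain hδ hgeo hhyp A B⁻¹ x x₀ lA lB lABinv (14 * δ + 2 * κ) hlABinv
        (hdispA x) (hdispBinv x) h1 h2' hthrA hthrB
      have hle : lABinv ≤ max lAB lABinv := le_max_right _ _
      linarith
  -- remove κ
  by_contra hcon
  push_neg at hcon
  have hgap : 0 < lA + lB - 68 * δ - max lAB lABinv := by linarith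
  have hκpos : 0 < min (min (lA / 1000) (lB / 1000)) ((lA + lB - 68 * δ - max lAB lABinv) / 16) :=
    lt_min (lt_min (by linarith) (by linarith)) (by linarith)
  have hκA : min (min (lA / 1000) (lB / 1000)) ((lA + lB - 68 * δ - max lAB lABinv) / 16) ≤
      lA / 1000 := le_trans (min_le_left _ _) (min_le_left _ _)
  have hκB : min (min (lA / 1000) (lB / 1000)) ((lA + lB - 68 * δ - max lAB lABinv) / 16) ≤
      lB / 1000 := le_trans (min_le_left _ _) (min_le_right _ _)
  have hκgap : min (min (lA / 1000) (lB / 1000)) ((lA + lB - 68 * δ - max lAB lABinv) / 16) ≤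
      (lA + lB - 68 * δ - max lAB lABinv) / 16 := min_le_right _ _
  have hk := key _ hκpos hκA hκB
  linarith
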